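/- Let n ≥ 1, let (Ω, P) be a probability space, and let X : Fin n → Ω → ℝ be random variables such that each X i has law gaussianReal 0 v_i (a centered Gaussian with variance v_i) with v_i ≤ ζ² for some ζ ≥ 0. Then the expectation of their pointwise maximum satisfies E[max_{1 ≤ i ≤ n} X_i] ≤ ζ · √(2 · log n). -/

import Mathlib

open MeasureTheory ProbabilityTheory Real
open scoped NNReal
open scoped ENNReal

lemma exp_mul_gaussianPDFReal (v : ℝ≥0) (hv : v ≠ 0) (t x : ℝ) :
    rexp (t * x) * gaussianPDFReal 0 v x
      = rexp ((v : ℝ) * t ^ 2 / 2) * gaussianPDFReal ((v : ℝ) * t) v x := by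
  have hv' : (0:ℝ) < (v:ℝ) := by positivity
  simp only [gaussianPDFReal, sub_zero]
  rw [mul_left_comm, mul_left_comm (rexp _), ← Real.exp_add, ← Real.exp_add]
  congr 2
  field_simp
  ring

lemma integrable_exp_gaussianReal (v : ℝ≥0) (t : ℝ) :
    Integrable (fun x => rexp (t * x)) (gaussianReal 0 v) := by
  by_cases hv : v = 0
  · subst hv
    rw [gaussianReal_zero_var]
    refine ⟨(Real.measurable_exp.comp (measurable_id.const_mul t)).aestronglyMeasurable, ?_⟩
    simp [HasFiniteIntegral, lintegral_dirac]
  · rw [gaussianReal_of_var_ne_zero _ hv,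
      integrable_withDensity_iff (measurable_gaussianPDF 0 v)
        (Filter.Eventually.of_forall fun x => ENNReal.ofReal_lt_top)]
    have heq : (fun x => rexp (t * x) * ((gaussianPDF 0 v x).toReal))
        = fun x => rexp ((v : ℝ) * t ^ 2 / 2) * gaussianPDFReal ((v : ℝ) * t) v x := by
      funext x
      rw [gaussianPDF, ENNReal.toReal_ofReal (gaussianPDFReal_nonneg 0 v x),
        exp_mul_gaussianPDFReal v hv]
    rw [heq]
    exact (integrable_gaussianPDFReal _ _).const_mul _

lemma integral_exp_gaussianReal (v : ℝ≥0) (t : ℝ) :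
    ∫ x, rexp (t * x) ∂(gaussianReal 0 v) = rexp ((v : ℝ) * t ^ 2 / 2) := by
  by_cases hv : v = 0
  · subst hv
    rw [gaussianReal_zero_var, integral_dirac]
    norm_num
  · rw [gaussianReal_of_var_ne_zero _ hv,
      show gaussianPDF 0 v = (fun x => ((gaussianPDFReal 0 v x).toNNReal : ℝ≥0∞))
        from rfl,
      integral_withDensity_eq_integral_smul ((measurable_gaussianPDFReal 0 v).real_toNNReal) _]
    have heq : (fun x => (Real.toNNReal (gaussianPDFReal 0 v x)) • rexp (t * x))
        = fun x => rexp ((v : ℝ) * t ^ 2 / 2) * gaussianPDFReal ((v : ℝ) * t) v x := by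
      funext x
      rw [NNReal.smul_def, smul_eq_mul, Real.coe_toNNReal _ (gaussianPDFReal_nonneg 0 v x),
        mul_comm, exp_mul_gaussianPDFReal v hv]
    rw [heq, integral_const_mul, integral_gaussianPDFReal_eq_one _ hv, mul_one]

lemma integrable_id_gaussianReal (v : ℝ≥0) : Integrable id (gaussianReal 0 v) := by
  refine ((integrable_exp_gaussianReal v 1).add (integrable_exp_gaussianReal v (-1))).mono'
    measurable_id.aestronglyMeasurable ?_
  filter_upwards with x
  simp only [id_eq, Real.norm_eq_abs, one_mul, neg_mul, Pi.add_apply]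
  rcases abs_cases x with ⟨h, _⟩ | ⟨h, _⟩ <;>
    nlinarith [Real.add_one_le_exp x, Real.add_one_le_exp (-x), Real.exp_pos x, Real.exp_pos (-x)]

lemma integral_id_gaussianReal_zero (v : ℝ≥0) : ∫ x, x ∂(gaussianReal 0 v) = 0 := by
  have hone : (⟨(-1:ℝ)^2, sq_nonneg _⟩ : ℝ≥0) = 1 := by ext; norm_num
  have hmap : (gaussianReal 0 v).map (fun x => (-1 : ℝ) * x) = gaussianReal 0 v := by
    rw [gaussianReal_map_const_mul]
    congr 1
    · ring
    · ext; simp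
  have hm : Measurable (fun x : ℝ => (-1 : ℝ) * x) := by fun_prop
  have h := integral_map (μ := gaussianReal 0 v) hm.aemeasurable
    (f := fun x => x) (by rw [hmap]; exact measurable_id.aestronglyMeasurable)
  rw [hmap] at h
  simp only [neg_mul, one_mul] at h
  rw [integral_neg] at h
  linarith

theorem expected_max_of_gaussians_le
    {Ω : Type*} [MeasurableSpace Ω] (P : Measure Ω) [IsProbabilityMeasure P]
    (n : ℕ) (hn : 1 ≤ n)
    (X : Fin n → Ω → ℝ) (hX : ∀ i, Measurable (X i))
    (v : Fin n → ℝ≥0) (ζ : ℝ) (hζ : 0 ≤ ζ)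
    (hlaw : ∀ i, P.map (X i) = gaussianReal 0 (v i))
    (hv : ∀ i, (v i : ℝ) ≤ ζ ^ 2) :
    ∫ ω, (⨆ i, X i ω) ∂P ≤ ζ * Real.sqrt (2 * Real.log n) := by
  haveI : NeZero n := ⟨Nat.one_le_iff_ne_zero.mp hn⟩
  haveI : Nonempty (Fin n) := ⟨0⟩
  set M : Ω → ℝ := fun ω => ⨆ i, X i ω with hMdef
  have hrhs : 0 ≤ ζ * Real.sqrt (2 * Real.log n) :=
    mul_nonneg hζ (Real.sqrt_nonneg _)
  have hMmeas : Measurable M := by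
    have h1 : M = Finset.univ.sup' Finset.univ_nonempty X := by
      funext ω
      rw [Finset.sup'_apply, Finset.sup'_univ_eq_ciSup]
    rw [h1]
    exact Finset.measurable_sup' _ (fun i _ => hX i)
  have hXint : ∀ i, Integrable (X i) P := by
    intro i
    have h : Integrable id (P.map (X i)) := by
      rw [hlaw i]; exact integrable_id_gaussianReal _
    exact (integrable_map_measure measurable_id.aestronglyMeasurable
      (hX i).aemeasurable).mp h
  have hMint : Integrable M P := by
    refine (integrable_finset_sum Finset.univ (fun i _ => (hXint i).abs)).mono'
      hMmeas.aestronglyMeasurable ?_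
    filter_upwards with ω
    rw [Real.norm_eq_abs, abs_le]
    obtain ⟨j, hj⟩ := exists_eq_ciSup_of_finite (f := fun i => X i ω)
    constructor
    · calc -∑ i, |X i ω| ≤ -|X (0 : Fin n) ω| := by
            refine neg_le_neg ?_
            exact Finset.single_le_sum (f := fun i => |X i ω|) (fun i _ => abs_nonneg _)
              (Finset.mem_univ (0 : Fin n))
        _ ≤ X (0 : Fin n) ω := neg_abs_le _
        _ ≤ M ω := le_ciSup (f := fun i => X i ω)
            (Set.Finite.bddAbove (Set.finite_range _)) (0 : Fin n)
    · calc M ω = X j ω := hj.symm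
        _ ≤ |X j ω| := le_abs_self _
        _ ≤ ∑ i, |X i ω| := Finset.single_le_sum (f := fun i => |X i ω|)
            (fun i _ => abs_nonneg _) (Finset.mem_univ j)
  by_cases hζ0 : ζ = 0
  · -- all variances are zero, all X i are a.e. zero
    have hXae : ∀ i, ∀ᵐ ω ∂P, X i ω = 0 := by
      intro i
      have hvi : v i = 0 := by
        have h0 : (v i : ℝ) ≤ 0 := by simpa [hζ0] using hv i
        exact le_antisymm (by exact_mod_cast h0) zero_le
      have hmap : P.map (X i) = Measure.dirac 0 := by
        rw [hlaw i, hvi, gaussianReal_zero_var]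
      have : P.map (X i) {(0:ℝ)}ᶜ = 0 := by
        rw [hmap, Measure.dirac_apply' _ (measurableSet_singleton (0:ℝ)).compl]
        simp
      rw [Measure.map_apply (hX i) (measurableSet_singleton (0:ℝ)).compl] at this
      exact this
    have hMae : M =ᵐ[P] 0 := by
      filter_upwards [MeasureTheory.ae_all_iff.mpr hXae] with ω hω
      simp only [hMdef, Pi.zero_apply]
      simp [hω]
    rw [integral_congr_ae hMae]
    simpa using hrhs
  have hζpos : 0 < ζ := lt_of_le_of_ne hζ (Ne.symm hζ0)
  by_cases hn1 : n = 1
  · subst hn1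
    have hieq : ∫ ω, M ω ∂P = ∫ ω, X (0 : Fin 1) ω ∂P := by
      refine integral_congr_ae (Filter.Eventually.of_forall fun ω => ?_)
      exact ciSup_unique
    have h := integral_map (μ := P) (hX 0).aemeasurable
      (f := fun x : ℝ => x) measurable_id.aestronglyMeasurable
    rw [hlaw 0, integral_id_gaussianReal_zero] at h
    rw [show (∫ ω, M ω ∂P) = ∫ ω, X (0 : Fin 1) ω ∂P from hieq, ← h]
    exact hrhs
  -- main case : n ≥ 2
  have hn2 : 2 ≤ n := by omega
  set L := Real.log n with hLdef
  have hL : 0 < L := Real.log_pos (by exact_mod_cast hn2)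
  set s := Real.sqrt (2 * L) with hsdef
  have hs : 0 < s := Real.sqrt_pos.mpr (by linarith)
  have hs2 : s ^ 2 = 2 * L := Real.sq_sqrt (by linarith)
  set t := s / ζ with htdef
  have ht : 0 < t := div_pos hs hζpos
  have hexpmeas : Measurable (fun x : ℝ => rexp (t * x)) :=
    Real.measurable_exp.comp (measurable_id.const_mul t)
  have hexpint : ∀ i, Integrable (fun ω => rexp (t * X i ω)) P := by
    intro i
    have h : Integrable (fun x => rexp (t * x)) (P.map (X i)) := by
      rw [hlaw i]; exact integrable_exp_gaussianReal _ _
    exact (integrable_map_measure hexpmeas.aestronglyMeasurable (hX i).aemeasurable).mp h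
  have hmgf : ∀ i, ∫ ω, rexp (t * X i ω) ∂P = rexp ((v i : ℝ) * t ^ 2 / 2) := by
    intro i
    have h := integral_map (μ := P) (hX i).aemeasurable
      (f := fun x : ℝ => rexp (t * x)) hexpmeas.aestronglyMeasurable
    rw [hlaw i, integral_exp_gaussianReal] at h
    rw [← h]
  have hptwise : ∀ ω, rexp (t * M ω) ≤ ∑ i, rexp (t * X i ω) := by
    intro ω
    obtain ⟨j, hj⟩ := exists_eq_ciSup_of_finite (f := fun i => X i ω)
    calc rexp (t * M ω) = rexp (t * X j ω) := by
          rw [show M ω = X j ω from hj.symm]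
      _ ≤ ∑ i, rexp (t * X i ω) :=
        Finset.single_le_sum (f := fun i => rexp (t * X i ω))
          (fun i _ => (Real.exp_pos _).le) (Finset.mem_univ j)
  have hMexpint : Integrable (fun ω => rexp (t * M ω)) P := by
    refine (integrable_finset_sum Finset.univ (fun i _ => hexpint i)).mono'
      (Real.measurable_exp.comp (hMmeas.const_mul t)).aestronglyMeasurable ?_
    filter_upwards with ω
    rw [Real.norm_eq_abs, abs_of_nonneg (Real.exp_pos _).le]
    exact hptwise ω
  -- Jensen
  have hjensen : rexp (t * ∫ ω, M ω ∂P) ≤ ∫ ω, rexp (t * M ω) ∂P := by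
    have h := (convexOn_exp).map_integral_le (μ := P) (f := fun ω => t * M ω)
      continuous_exp.continuousOn isClosed_univ
      (Filter.Eventually.of_forall fun _ => Set.mem_univ _)
      (hMint.const_mul t) (by exact hMexpint)
    rwa [integral_const_mul] at h
  have hsum : ∫ ω, rexp (t * M ω) ∂P ≤ (n : ℝ) * rexp (t ^ 2 * ζ ^ 2 / 2) := by
    calc ∫ ω, rexp (t * M ω) ∂P ≤ ∫ ω, ∑ i, rexp (t * X i ω) ∂P :=
          integral_mono hMexpint (integrable_finset_sum _ fun i _ => hexpint i) hptwise
      _ = ∑ i, ∫ ω, rexp (t * X i ω) ∂P := integral_finset_sum _ fun i _ => hexpint i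
      _ = ∑ i : Fin n, rexp ((v i : ℝ) * t ^ 2 / 2) := by
          exact Finset.sum_congr rfl fun i _ => hmgf i
      _ ≤ ∑ i : Fin n, rexp (t ^ 2 * ζ ^ 2 / 2) := by
          refine Finset.sum_le_sum fun i _ => Real.exp_le_exp.mpr ?_
          have := hv i
          nlinarith [sq_nonneg t]
      _ = (n : ℝ) * rexp (t ^ 2 * ζ ^ 2 / 2) := by
          rw [Finset.sum_const, Finset.card_univ, Fintype.card_fin, nsmul_eq_mul]
  have hkey : t * ∫ ω, M ω ∂P ≤ L + t ^ 2 * ζ ^ 2 / 2 := by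
    have h1 : rexp (t * ∫ ω, M ω ∂P) ≤ (n : ℝ) * rexp (t ^ 2 * ζ ^ 2 / 2) :=
      hjensen.trans hsum
    have hpos : (0 : ℝ) < (n : ℝ) * rexp (t ^ 2 * ζ ^ 2 / 2) := by positivity
    have h2 := (Real.le_log_iff_exp_le hpos).mpr h1
    rwa [Real.log_mul (by positivity) (Real.exp_pos _).ne', Real.log_exp] at h2
  have ht2 : t ^ 2 * ζ ^ 2 = 2 * L := by
    rw [htdef, div_pow]
    field_simp
    linarith [hs2]
  rw [ht2] at hkey
  -- t * goalRHS = t * ζ * s = s ^ 2 = 2 L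
  have hfin : t * (ζ * s) = 2 * L := by
    have h1 : t * (ζ * s) = (s * s) * (ζ / ζ) := by rw [htdef]; ring
    rw [h1, div_self hζpos.ne', mul_one, ← pow_two, hs2]
  have : t * ∫ ω, M ω ∂P ≤ t * (ζ * s) := by
    rw [hfin]; linarith [hkey]
  exact le_of_mul_le_mul_left this ht
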